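/- Let q ≥ 2 and let G be a finite connected bipartite (q+1)-regular graph on Q vertices whose adjacency-matrix eigenvalues other than ±(q+1) all have absolute value at most √q. Then for every subset A of the vertices of G with |A| ≤ Q/2: |E(A,Ā)| ≥ (1/2)·(q+1−√q)·|A|. -/

import Mathlib

open scoped Classical
open Matrix

private lemma eig_top_const {V : Type} [Fintype V] [DecidableEq V] (q : ℕ) (G : SimpleGraph V)
    (hconn : G.Connected) (hreg : ∀ v : V, G.degree v = q + 1) (f : V → ℝ)
    (hf : G.adjMatrix ℝ *ᵥ f = ((q : ℝ) + 1) • f) : ∀ u w : V, f u = f w := by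
  have hne : Nonempty V := hconn.nonempty
  obtain ⟨v₀, -, hv₀⟩ := Finset.exists_max_image Finset.univ f
    ⟨Classical.arbitrary V, Finset.mem_univ _⟩
  have hv₀' : ∀ w : V, f w ≤ f v₀ := fun w => hv₀ w (Finset.mem_univ w)
  have step : ∀ v w : V, G.Adj v w → f v = f v₀ → f w = f v₀ := by
    intro v w hadj hv
    have h := congrFun hf v
    rw [SimpleGraph.adjMatrix_mulVec_apply] at h
    have h1 : ∑ u ∈ G.neighborFinset v, f u = ((q : ℝ) + 1) * f v₀ := by
      rw [h, Pi.smul_apply, smul_eq_mul, hv]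
    have hcardN : (G.neighborFinset v).card = q + 1 := by
      rw [G.card_neighborFinset_eq_degree]; exact hreg v
    have h2 : ∑ u ∈ G.neighborFinset v, (f v₀ - f u) = 0 := by
      rw [Finset.sum_sub_distrib, h1, Finset.sum_const, hcardN]
      push_cast
      ring
    have h3 := (Finset.sum_eq_zero_iff_of_nonneg
      (fun u _ => sub_nonneg.2 (hv₀' u))).mp h2
    have h4 := h3 w (by rwa [SimpleGraph.mem_neighborFinset])
    linarith
  have walk : ∀ (v w : V) (p : G.Walk v w), f v = f v₀ → f w = f v₀ := by
    intro v w p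
    induction p with
    | nil => exact id
    | cons h p ih => exact fun hv => ih (step _ _ h hv)
  intro u w
  have hu := (hconn.preconnected v₀ u).elim fun p => walk _ _ p rfl
  have hw := (hconn.preconnected v₀ w).elim fun p => walk _ _ p rfl
  rw [hu, hw]

set_option maxHeartbeats 1000000 in
theorem bipartite_expander_edge_boundary
    {V : Type} [Fintype V] [DecidableEq V] (q Q : ℕ) (hq : 2 ≤ q)
    (G : SimpleGraph V) (hconn : G.Connected) (hcard : Fintype.card V = Q)
    (hbip : ∃ C : V → Bool, ∀ u w, G.Adj u w → C u ≠ C w)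
    (hreg : ∀ v : V, G.degree v = q + 1)
    (heig : ∀ mu : ℝ, (∃ f : V → ℝ, f ≠ 0 ∧ G.adjMatrix ℝ *ᵥ f = mu • f) →
      mu = (q : ℝ) + 1 ∨ mu = -((q : ℝ) + 1) ∨ |mu| ≤ Real.sqrt q)
    (A : Finset V) (hA : (A.card : ℝ) ≤ (Q : ℝ) / 2) :
    ((G.edgeFinset.filter fun e => ∃ u ∈ e, ∃ w ∈ e, u ∈ A ∧ w ∉ A).card : ℝ) ≥
      (1 / 2) * ((q : ℝ) + 1 - Real.sqrt q) * (A.card : ℝ) := by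
  classical
  have hne : Nonempty V := hconn.nonempty
  have hQ0 : (0 : ℝ) < Q := by
    have h := Fintype.card_pos (α := V)
    rw [hcard] at h
    exact_mod_cast h
  have hQne : (Q : ℝ) ≠ 0 := ne_of_gt hQ0
  set M : Matrix V V ℝ := G.adjMatrix ℝ with hMdef
  have hsym : ∀ v w : V, M v w = M w v := by
    intro v w
    simp [hMdef, SimpleGraph.adjMatrix_apply, SimpleGraph.adj_comm]
  have hM : M.IsHermitian := by
    show Mᴴ = M
    ext i j
    simp only [Matrix.conjTranspose_apply, conj_trivial]
    exact hsym j i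
  set B := hM.eigenvectorBasis with hBdef
  set μ := hM.eigenvalues with hμdef
  have hMB : ∀ i, M *ᵥ (B i : V → ℝ) = μ i • (B i : V → ℝ) := fun i =>
    hM.mulVec_eigenvectorBasis i
  set x : V → ℝ := fun v => if v ∈ A then 1 else 0 with hxdef
  set a : ℝ := (A.card : ℝ) with hadef
  have ha0 : (0 : ℝ) ≤ a := Nat.cast_nonneg _
  -- indicator sums
  have hsum_ind : ∀ t : V → ℝ, ∑ v, x v * t v = ∑ v ∈ A, t v := by
    intro t
    have h : ∀ v, x v * t v = if v ∈ A then t v else 0 := by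
      intro v; by_cases h : v ∈ A <;> simp [hxdef, h]
    simp_rw [h]
    rw [Finset.sum_ite_mem, Finset.univ_inter]
  have hxa : ∑ v, x v = a := by
    have := hsum_ind (fun _ => 1)
    simpa [hadef] using this
  -- coefficients
  set c : V → ℝ := fun i => ∑ v, B i v * x v with hcdef
  have horth : ∀ i j, ∑ v, B i v * B j v = if i = j then 1 else 0 := by
    intro i j
    have h := orthonormal_iff_ite.mp B.orthonormal i j
    calc ∑ v, B i v * B j v = (inner ℝ (B i) (B j) : ℝ) := by
          simp [PiLp.inner_apply, RCLike.inner_apply, conj_trivial, mul_comm]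
      _ = if i = j then 1 else 0 := h
  have hBne : ∀ i, (B i : V → ℝ) ≠ 0 := by
    intro i h
    have h1 := B.orthonormal.1 i
    rw [show B i = 0 from by simpa using congrArg (WithLp.toLp 2) h] at h1
    simp at h1
  have hrepr : ∀ i, B.repr (WithLp.toLp 2 x) i = c i := by
    intro i
    rw [B.repr_apply_apply]
    simp [hcdef, PiLp.inner_apply, RCLike.inner_apply, conj_trivial, mul_comm]
  have hxv : ∀ v, x v = ∑ i, c i * B i v := by
    intro v
    have h : (∑ i, B.repr (WithLp.toLp 2 x) i • (B i : V → ℝ)) v = x v := by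
      have h0 := congrArg (fun y : EuclideanSpace ℝ V => (y : V → ℝ) v) (B.sum_repr (WithLp.toLp 2 x))
      simpa [WithLp.ofLp_sum] using h0
    rw [Finset.sum_apply v Finset.univ _] at h
    rw [← h]
    refine Finset.sum_congr rfl fun i _ => ?_
    rw [hrepr i]
    rfl
  -- Parseval
  have hpars : ∑ i, c i ^ 2 = a := by
    have h1 : ∑ v, x v * x v = a := by
      have h := hsum_ind x
      rw [h]
      calc ∑ v ∈ A, x v = ∑ v ∈ A, 1 := Finset.sum_congr rfl fun v hv => by simp [hxdef, hv]
        _ = a := by simp [hadef]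
    calc ∑ i, c i ^ 2 = ∑ i, c i * c i := by simp [sq]
      _ = ∑ i, c i * ∑ v, B i v * x v := rfl
      _ = ∑ i, ∑ v, c i * (B i v * x v) := by simp_rw [Finset.mul_sum]
      _ = ∑ v, ∑ i, c i * (B i v * x v) := Finset.sum_comm
      _ = ∑ v, (∑ i, c i * B i v) * x v := by
          refine Finset.sum_congr rfl fun v _ => ?_
          rw [Finset.sum_mul]
          refine Finset.sum_congr rfl fun i _ => by ring
      _ = ∑ v, x v * x v := by
          refine Finset.sum_congr rfl fun v _ => ?_
          rw [← hxv v]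
      _ = a := h1
  -- spectral quadratic form
  have hBMx : ∀ i, ∑ v, B i v * (M *ᵥ x) v = μ i * c i := by
    intro i
    calc ∑ v, B i v * (M *ᵥ x) v
        = ∑ v, ∑ w, B i v * (M v w * x w) := by
          refine Finset.sum_congr rfl fun v _ => ?_
          rw [show (M *ᵥ x) v = ∑ w, M v w * x w from rfl, Finset.mul_sum]
      _ = ∑ w, ∑ v, B i v * (M v w * x w) := Finset.sum_comm
      _ = ∑ w, (∑ v, M w v * B i v) * x w := by
          refine Finset.sum_congr rfl fun w _ => ?_
          rw [Finset.sum_mul]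
          refine Finset.sum_congr rfl fun v _ => ?_
          rw [hsym v w]; ring
      _ = ∑ w, (μ i * B i w) * x w := by
          refine Finset.sum_congr rfl fun w _ => ?_
          have h := congrFun (hMB i) w
          rw [show (M *ᵥ (B i : V → ℝ)) w = ∑ v, M w v * B i v from rfl] at h
          rw [h, Pi.smul_apply, smul_eq_mul]
      _ = μ i * c i := by
          rw [hcdef]
          simp_rw [Finset.mul_sum]
          refine Finset.sum_congr rfl fun w _ => by ring
  have hquad : ∑ v, x v * (M *ᵥ x) v = ∑ i, μ i * c i ^ 2 := by
    calc ∑ v, x v * (M *ᵥ x) v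
        = ∑ v, ∑ i, c i * B i v * (M *ᵥ x) v := by
          refine Finset.sum_congr rfl fun v _ => ?_
          conv_lhs => rw [hxv v]
          rw [Finset.sum_mul]
      _ = ∑ i, ∑ v, c i * B i v * (M *ᵥ x) v := Finset.sum_comm
      _ = ∑ i, c i * ∑ v, B i v * (M *ᵥ x) v := by
          refine Finset.sum_congr rfl fun i _ => ?_
          rw [Finset.mul_sum]
          refine Finset.sum_congr rfl fun v _ => by ring
      _ = ∑ i, μ i * c i ^ 2 := by
          refine Finset.sum_congr rfl fun i _ => ?_
          rw [hBMx i]; ring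
  -- combinatorial quadratic form
  have hquadcomb : ∑ v, x v * (M *ᵥ x) v = ∑ v ∈ A, ∑ w ∈ A, M v w := by
    rw [hsum_ind]
    refine Finset.sum_congr rfl fun v _ => ?_
    calc (M *ᵥ x) v = ∑ w, M v w * x w := rfl
      _ = ∑ w, x w * M v w := by simp_rw [mul_comm]
      _ = ∑ w ∈ A, M v w := hsum_ind (M v)
  -- row sums
  have hrow : ∀ v, ∑ w, M v w = (q : ℝ) + 1 := by
    intro v
    have h1 : ∑ w, M v w = ∑ w, if G.Adj v w then (1 : ℝ) else 0 := by
      refine Finset.sum_congr rfl fun w _ => by simp [hMdef]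
    rw [h1, Finset.sum_boole, ← SimpleGraph.neighborFinset_eq_filter,
      SimpleGraph.card_neighborFinset_eq_degree, hreg v]
    push_cast; ring
  -- edge boundary count
  set Ac : Finset V := Finset.univ \ A with hAcdef
  set P : Finset (V × V) := (A ×ˢ Ac).filter (fun p => G.Adj p.1 p.2) with hPdef
  have hbij : (G.edgeFinset.filter fun e => ∃ u ∈ e, ∃ w ∈ e, u ∈ A ∧ w ∉ A).card = P.card := by
    refine (Finset.card_bij (fun p _ => s(p.1, p.2)) ?_ ?_ ?_).symm
    · rintro ⟨u, w⟩ hp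
      rw [hPdef, Finset.mem_filter, Finset.mem_product, hAcdef, Finset.mem_sdiff] at hp
      obtain ⟨⟨huA, -, hwA⟩, hadj⟩ := hp
      rw [Finset.mem_filter]
      exact ⟨SimpleGraph.mem_edgeFinset.mpr hadj,
        u, Sym2.mem_mk_left u w, w, Sym2.mem_mk_right u w, huA, hwA⟩
    · rintro ⟨u, w⟩ h1 ⟨u', w'⟩ h2 heq
      rw [hPdef, Finset.mem_filter, Finset.mem_product, hAcdef, Finset.mem_sdiff] at h1 h2
      obtain ⟨⟨huA, -, hwA⟩, -⟩ := h1
      obtain ⟨⟨huA', -, hwA'⟩, -⟩ := h2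
      rcases Sym2.eq_iff.mp heq with ⟨h1, h2⟩ | ⟨h1, h2⟩
      · exact Prod.ext h1 h2
      · exact absurd (h1 ▸ huA) hwA'
    · rintro e he
      rw [Finset.mem_filter] at he
      obtain ⟨hee, u, hu, w, hw, huA, hwA⟩ := he
      have hne' : u ≠ w := fun h => hwA (h ▸ huA)
      have he2 : e = s(u, w) := (Sym2.mem_and_mem_iff hne').mp ⟨hu, hw⟩
      have hadj : G.Adj u w := by
        rw [SimpleGraph.mem_edgeFinset, he2, SimpleGraph.mem_edgeSet] at hee
        exact hee
      refine ⟨(u, w), ?_, he2.symm⟩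
      rw [hPdef, Finset.mem_filter, Finset.mem_product, hAcdef, Finset.mem_sdiff]
      exact ⟨⟨huA, Finset.mem_univ _, hwA⟩, hadj⟩
  have hPcard : (P.card : ℝ) = ∑ v ∈ A, ∑ w ∈ Ac, M v w := by
    rw [hPdef, Finset.card_filter]
    push_cast
    rw [Finset.sum_product]
    refine Finset.sum_congr rfl fun v _ => Finset.sum_congr rfl fun w _ => by
      simp [hMdef]
  have hEcount : ((G.edgeFinset.filter fun e => ∃ u ∈ e, ∃ w ∈ e, u ∈ A ∧ w ∉ A).card : ℝ)
      = ((q : ℝ) + 1) * a - ∑ v ∈ A, ∑ w ∈ A, M v w := by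
    rw [hbij, hPcard]
    have h1 : ∀ v, ∑ w ∈ Ac, M v w = ((q : ℝ) + 1) - ∑ w ∈ A, M v w := by
      intro v
      rw [hAcdef, Finset.sum_sdiff_eq_sub (Finset.subset_univ A), hrow v]
    rw [Finset.sum_congr rfl fun v _ => h1 v, Finset.sum_sub_distrib, Finset.sum_const,
      nsmul_eq_mul]
    rw [hadef]; ring
  -- spectral analysis
  set r : ℝ := Real.sqrt q with hrdef
  have hr0 : (0 : ℝ) ≤ r := Real.sqrt_nonneg _
  have hrq : r ≤ (q : ℝ) + 1 := by
    have hq0 : (0 : ℝ) ≤ (q : ℝ) := Nat.cast_nonneg _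
    have h1 : Real.sqrt q ≤ Real.sqrt (((q : ℝ) + 1) ^ 2) :=
      Real.sqrt_le_sqrt (by nlinarith)
    rwa [Real.sqrt_sq (by positivity)] at h1
  have hcases : ∀ i, μ i = (q : ℝ) + 1 ∨ μ i = -((q : ℝ) + 1) ∨ |μ i| ≤ r :=
    fun i => heig (μ i) ⟨B i, hBne i, hMB i⟩
  -- top eigenvectors are constant
  have hkey : ∀ i, μ i = (q : ℝ) + 1 → ∀ v, B i v = B i (Classical.arbitrary V) := by
    intro i hi v
    exact eig_top_const q G hconn hreg (B i) (by rw [← hMdef, hMB i, hi]) v _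
  have hksq : ∀ i, μ i = (q : ℝ) + 1 →
      (Q : ℝ) * (B i (Classical.arbitrary V)) ^ 2 = 1 := by
    intro i hi
    have h := horth i i
    rw [if_pos rfl] at h
    have h2 : ∑ v : V, B i v * B i v
        = (Q : ℝ) * (B i (Classical.arbitrary V)) ^ 2 := by
      rw [Finset.sum_congr rfl (fun v _ => by rw [hkey i hi v])]
      rw [Finset.sum_const, Finset.card_univ, hcard, nsmul_eq_mul]
      ring
    rw [h2] at h
    exact h
  have hci : ∀ i, μ i = (q : ℝ) + 1 → c i ^ 2 = a ^ 2 / Q := by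
    intro i hi
    have hk := hksq i hi
    have hc : c i = B i (Classical.arbitrary V) * a := by
      show (∑ v, B i v * x v) = _
      rw [Finset.sum_congr rfl (fun v _ => by rw [hkey i hi v]), ← Finset.mul_sum, hxa]
    rw [hc, mul_pow]
    field_simp
    nlinarith [hk]
  set Splus : Finset V := Finset.univ.filter (fun i => μ i = (q : ℝ) + 1) with hSplusdef
  have hcard1 : Splus.card ≤ 1 := by
    rw [Finset.card_le_one]
    intro i hi j hj
    by_contra hij
    have h0 := horth i j
    rw [if_neg hij] at h0
    have hiq := (Finset.mem_filter.mp hi).2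
    have hjq := (Finset.mem_filter.mp hj).2
    have hki := hksq i hiq
    have hkj := hksq j hjq
    have h2 : ∑ v : V, B i v * B j v
        = (Q : ℝ) * (B i (Classical.arbitrary V) * B j (Classical.arbitrary V)) := by
      rw [Finset.sum_congr rfl (fun v _ => by rw [hkey i hiq v, hkey j hjq v])]
      rw [Finset.sum_const, Finset.card_univ, hcard, nsmul_eq_mul]
    rw [h2] at h0
    have h4 : ((Q : ℝ) * (B i (Classical.arbitrary V) * B j (Classical.arbitrary V))) ^ 2
        = ((Q : ℝ) * (B i (Classical.arbitrary V)) ^ 2)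
          * ((Q : ℝ) * (B j (Classical.arbitrary V)) ^ 2) := by ring
    rw [h0, hki, hkj] at h4
    norm_num at h4
  -- split the spectral sum
  have hsplit := Finset.sum_filter_add_sum_filter_not Finset.univ
    (fun i => μ i = (q : ℝ) + 1) (fun i => μ i * c i ^ 2)
  have hsplit2 := Finset.sum_filter_add_sum_filter_not Finset.univ
    (fun i => μ i = (q : ℝ) + 1) (fun i => c i ^ 2)
  set T : ℝ := (Splus.card : ℝ) * (a ^ 2 / Q) with hTdef
  have h1 : ∑ i ∈ Splus, μ i * c i ^ 2 = ((q : ℝ) + 1) * T := by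
    rw [Finset.sum_congr rfl (fun i hi => by
      rw [(Finset.mem_filter.mp hi).2, hci i (Finset.mem_filter.mp hi).2]),
      Finset.sum_const, nsmul_eq_mul, hTdef]
    ring
  have h2 : ∑ i ∈ Splus, c i ^ 2 = T := by
    rw [Finset.sum_congr rfl (fun i hi => hci i (Finset.mem_filter.mp hi).2),
      Finset.sum_const, nsmul_eq_mul, hTdef]
  have h3 : ∑ i ∈ Finset.univ.filter (fun i => ¬ μ i = (q : ℝ) + 1), μ i * c i ^ 2
      ≤ r * ∑ i ∈ Finset.univ.filter (fun i => ¬ μ i = (q : ℝ) + 1), c i ^ 2 := by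
    rw [Finset.mul_sum]
    refine Finset.sum_le_sum fun i hi => ?_
    have hnot := (Finset.mem_filter.mp hi).2
    have hcsq : (0 : ℝ) ≤ c i ^ 2 := sq_nonneg _
    rcases hcases i with h | h | h
    · exact absurd h hnot
    · have hq0 : (0 : ℝ) ≤ (q : ℝ) := Nat.cast_nonneg _
      nlinarith
    · have := (abs_le.mp h).2
      nlinarith
  have hT0 : (0 : ℝ) ≤ T := by
    rw [hTdef]
    exact mul_nonneg (Nat.cast_nonneg _) (div_nonneg (sq_nonneg _) (Nat.cast_nonneg _))
  have hTle : T ≤ a ^ 2 / Q := by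
    have hc1 : ((Splus.card : ℝ)) ≤ 1 := by exact_mod_cast hcard1
    have : (0 : ℝ) ≤ a ^ 2 / Q := div_nonneg (sq_nonneg _) (Nat.cast_nonneg _)
    nlinarith
  have hS : ∑ i, μ i * c i ^ 2 ≤ r * a + ((q : ℝ) + 1 - r) * (a ^ 2 / Q) := by
    have hnotsum : ∑ i ∈ Finset.univ.filter (fun i => ¬ μ i = (q : ℝ) + 1), c i ^ 2
        = a - T := by
      have := hsplit2
      rw [show Finset.univ.filter (fun i => μ i = (q : ℝ) + 1) = Splus from rfl, h2] at this
      rw [hpars] at this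
      linarith
    calc ∑ i, μ i * c i ^ 2
        = ((q : ℝ) + 1) * T
          + ∑ i ∈ Finset.univ.filter (fun i => ¬ μ i = (q : ℝ) + 1), μ i * c i ^ 2 := by
          rw [← h1]
          rw [show Finset.univ.filter (fun i => μ i = (q : ℝ) + 1) = Splus from rfl] at hsplit
          linarith [hsplit]
      _ ≤ ((q : ℝ) + 1) * T + r * (a - T) := by
          rw [← hnotsum]
          linarith [h3]
      _ = r * a + ((q : ℝ) + 1 - r) * T := by ring
      _ ≤ r * a + ((q : ℝ) + 1 - r) * (a ^ 2 / Q) := by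
          have hpos : (0 : ℝ) ≤ (q : ℝ) + 1 - r := by linarith
          nlinarith
  -- final arithmetic
  have hfinal : ∑ v ∈ A, ∑ w ∈ A, M v w ≤ r * a + ((q : ℝ) + 1 - r) * (a ^ 2 / Q) := by
    rw [← hquadcomb, hquad]
    exact hS
  rw [ge_iff_le, hEcount]
  have hdiv : a ^ 2 / Q * Q = a ^ 2 := div_mul_cancel₀ _ hQne
  nlinarith [hfinal, hdiv, hQ0, ha0, hA, hrq,
    mul_nonneg (mul_nonneg (sub_nonneg.2 hrq) ha0) (by linarith : (0:ℝ) ≤ (Q : ℝ) / 2 - a)]
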